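/- Let μ be a finite measure on a measurable space X. Then every nonempty upward-directed subset D of the real Banach lattice L^∞(μ) that is bounded above has a least upper bound s in L^∞(μ), and ∫ s dμ = sup_{f ∈ D} ∫ f dμ. Moreover, the integral is faithful on L^∞(μ): if f ∈ L^∞(μ) satisfies f ≥ 0 and ∫ f dμ = 0, then f = 0. -/

import Mathlib

open MeasureTheory Filter Topology

namespace LinftyAux

variable {X : Type*} [MeasurableSpace X] {μ : Measure X} [IsFiniteMeasure μ]

lemma integrable_Lp_top (f : Lp ℝ ⊤ μ) : Integrable f μ :=
  (Lp.memLp f).integrable le_top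

lemma faithful (f : Lp ℝ ⊤ μ) (hf : 0 ≤ f) (hint : (∫ x, f x ∂μ) = 0) : f = 0 := by
  have h0 : ⇑(0 : Lp ℝ ⊤ μ) ≤ᵐ[μ] ⇑f := (Lp.coeFn_le 0 f).mpr hf
  have h0' : 0 ≤ᵐ[μ] ⇑f := by
    filter_upwards [h0, Lp.coeFn_zero ℝ ⊤ μ] with x h1 h2
    exact h2 ▸ h1
  have heq : ⇑f =ᵐ[μ] 0 :=
    (integral_eq_zero_iff_of_nonneg_ae h0' (integrable_Lp_top f)).1 hint
  exact Lp.ext (heq.trans (Lp.coeFn_zero ℝ ⊤ μ).symm)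

lemma lub (D : Set (Lp ℝ ⊤ μ)) (hne : D.Nonempty) (hdir : DirectedOn (· ≤ ·) D)
    (hbdd : BddAbove D) :
    ∃ s : Lp ℝ ⊤ μ, IsLUB D s ∧
      IsLUB ((fun f : Lp ℝ ⊤ μ => ∫ x, f x ∂μ) '' D) (∫ x, s x ∂μ) := by
  obtain ⟨b, hb⟩ := hbdd
  obtain ⟨f0, hf0⟩ := hne
  set S : Set ℝ := (fun f : Lp ℝ ⊤ μ => ∫ x, f x ∂μ) '' D with hS
  have hSne : S.Nonempty := ⟨_, f0, hf0, rfl⟩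
  have hSbdd : BddAbove S := by
    refine ⟨∫ x, b x ∂μ, ?_⟩
    rintro _ ⟨f, hf, rfl⟩
    exact integral_mono_ae (integrable_Lp_top f) (integrable_Lp_top b)
      ((Lp.coeFn_le f b).mpr (hb hf))
  set M := sSup S with hM
  obtain ⟨u, hu_mono, hu_tendsto, hu_mem⟩ := exists_seq_tendsto_sSup hSne hSbdd
  choose F hFD hFval using hu_mem
  have hdir' : ∀ a c : {f : Lp ℝ ⊤ μ // f ∈ D}, ∃ z : {f : Lp ℝ ⊤ μ // f ∈ D},
      a.1 ≤ z.1 ∧ c.1 ≤ z.1 := by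
    intro a c
    obtain ⟨z, hz, h1, h2⟩ := hdir a a.2 c c.2
    exact ⟨⟨z, hz⟩, h1, h2⟩
  choose pick hpick1 hpick2 using hdir'
  set F' : ℕ → {f : Lp ℝ ⊤ μ // f ∈ D} := fun n => ⟨F n, hFD n⟩ with hF'
  set g : ℕ → {f : Lp ℝ ⊤ μ // f ∈ D} :=
    fun n => Nat.rec (F' 0) (fun n gn => pick gn (F' (n + 1))) n with hg
  have hg_step : ∀ n, (g n).1 ≤ (g (n + 1)).1 := fun n => hpick1 _ _
  have hg_geF : ∀ n, (F' n).1 ≤ (g n).1 := by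
    intro n
    cases n with
    | zero => exact le_rfl
    | succ n => exact hpick2 _ _
  have hgD : ∀ n, (g n).1 ∈ D := fun n => (g n).2
  have hg_int_le : ∀ n, ∫ x, (g n).1 x ∂μ ≤ M := fun n => le_csSup hSbdd ⟨_, hgD n, rfl⟩
  have hg_int_ge : ∀ n, u n ≤ ∫ x, (g n).1 x ∂μ := by
    intro n
    rw [← hFval n]
    exact integral_mono_ae (integrable_Lp_top _) (integrable_Lp_top _)
      ((Lp.coeFn_le _ _).mpr (hg_geF n))
  have hg_int_tendsto : Tendsto (fun n => ∫ x, (g n).1 x ∂μ) atTop (𝓝 M) :=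
    tendsto_of_tendsto_of_tendsto_of_le_of_le hu_tendsto tendsto_const_nhds hg_int_ge hg_int_le
  have hmono_ae : ∀ᵐ x ∂μ, ∀ n : ℕ, (g n).1 x ≤ (g (n + 1)).1 x :=
    ae_all_iff.2 fun n => (Lp.coeFn_le _ _).2 (hg_step n)
  have hbdd_ae : ∀ᵐ x ∂μ, ∀ n : ℕ, (g n).1 x ≤ b x :=
    ae_all_iff.2 fun n => (Lp.coeFn_le _ _).2 (hb (hgD n))
  set sf : X → ℝ := fun x => ⨆ n, (g n).1 x with hsf
  have hsf_meas : AEStronglyMeasurable sf μ :=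
    (AEMeasurable.iSup fun n => (Lp.aestronglyMeasurable (g n).1).aemeasurable).aestronglyMeasurable
  have hbound : MemLp (fun x => |(g 0).1 x| + |b x|) ⊤ μ :=
    ((Lp.memLp (g 0).1).abs).add ((Lp.memLp b).abs)
  have hsf_mem : MemLp sf ⊤ μ := by
    refine hbound.mono hsf_meas ?_
    filter_upwards [hmono_ae, hbdd_ae] with x h1 h2
    have hmono : Monotone fun n => (g n).1 x := monotone_nat_of_le_succ h1
    have hba : BddAbove (Set.range fun n => (g n).1 x) := by
      refine ⟨b x, ?_⟩
      rintro _ ⟨n, rfl⟩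
      exact h2 n
    have le1 : (g 0).1 x ≤ sf x := le_ciSup hba 0
    have le2 : sf x ≤ b x := ciSup_le h2
    have h3 := neg_abs_le ((g 0).1 x)
    have h4 := le_abs_self (b x)
    have h5 := abs_nonneg ((g 0).1 x)
    have h6 := abs_nonneg (b x)
    simp only [Real.norm_eq_abs]
    rw [abs_of_nonneg (add_nonneg (abs_nonneg ((g 0).1 x)) (abs_nonneg (b x)))]
    exact abs_le.2 ⟨by linarith, by linarith⟩
  set s : Lp ℝ ⊤ μ := hsf_mem.toLp sf with hs
  have hs_coe : ⇑s =ᵐ[μ] sf := hsf_mem.coeFn_toLp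
  have htendsto_ae : ∀ᵐ x ∂μ, Tendsto (fun n => (g n).1 x) atTop (𝓝 (sf x)) := by
    filter_upwards [hmono_ae, hbdd_ae] with x h1 h2
    refine tendsto_atTop_ciSup (monotone_nat_of_le_succ h1) ⟨b x, ?_⟩
    rintro _ ⟨n, rfl⟩
    exact h2 n
  have hsf_int : Integrable sf μ := hsf_mem.integrable le_top
  have hint_tendsto : Tendsto (fun n => ∫ x, (g n).1 x ∂μ) atTop (𝓝 (∫ x, sf x ∂μ)) :=
    integral_tendsto_of_tendsto_of_monotone (fun n => integrable_Lp_top _) hsf_int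
      (by filter_upwards [hmono_ae] with x h1; exact monotone_nat_of_le_succ h1) htendsto_ae
  have hint_s : ∫ x, sf x ∂μ = M := tendsto_nhds_unique hint_tendsto hg_int_tendsto
  have hint_s' : ∫ x, s x ∂μ = M := by rw [integral_congr_ae hs_coe, hint_s]
  have hub : ∀ f ∈ D, f ≤ s := by
    intro f hf
    set φ : X → ℝ := fun x => max (f x) (sf x) with hφ
    have hφ_int : Integrable φ μ := by
      have := (integrable_Lp_top f).sup hsf_int
      simpa [Pi.sup_def] using this
    have hφn_int : ∀ n : ℕ, Integrable (fun x => max (f x) ((g n).1 x)) μ := by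
      intro n
      have := (integrable_Lp_top f).sup (integrable_Lp_top (g n).1)
      simpa [Pi.sup_def] using this
    have htendφ : Tendsto (fun n => ∫ x, max (f x) ((g n).1 x) ∂μ) atTop (𝓝 (∫ x, φ x ∂μ)) := by
      refine integral_tendsto_of_tendsto_of_monotone hφn_int hφ_int ?_ ?_
      · filter_upwards [hmono_ae] with x h1
        exact monotone_nat_of_le_succ fun n => max_le_max le_rfl (h1 n)
      · filter_upwards [htendsto_ae] with x hx
        exact tendsto_const_nhds.max hx
    have hboundφ : ∀ n : ℕ, ∫ x, max (f x) ((g n).1 x) ∂μ ≤ M := by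
      intro n
      set h : {f : Lp ℝ ⊤ μ // f ∈ D} := pick ⟨f, hf⟩ (g n) with hh
      have hle : (fun x => max (f x) ((g n).1 x)) ≤ᵐ[μ] ⇑h.1 := by
        filter_upwards [(Lp.coeFn_le f h.1).2 (hpick1 ⟨f, hf⟩ (g n)),
          (Lp.coeFn_le (g n).1 h.1).2 (hpick2 ⟨f, hf⟩ (g n))] with x h1 h2
        exact max_le h1 h2
      refine le_trans (integral_mono_ae (hφn_int n) (integrable_Lp_top h.1) hle) ?_
      exact le_csSup hSbdd ⟨h.1, h.2, rfl⟩
    have hφ_le : ∫ x, φ x ∂μ ≤ M := le_of_tendsto htendφ (Eventually.of_forall hboundφ)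
    have hψ_nonneg : 0 ≤ᵐ[μ] fun x => φ x - sf x :=
      Eventually.of_forall fun x => sub_nonneg.2 (le_max_right _ _)
    have hψ_int : Integrable (fun x => φ x - sf x) μ := hφ_int.sub hsf_int
    have hψ_zero : ∫ x, φ x - sf x ∂μ = 0 := by
      have h1 : ∫ x, φ x - sf x ∂μ = (∫ x, φ x ∂μ) - ∫ x, sf x ∂μ :=
        integral_sub hφ_int hsf_int
      have h2 : 0 ≤ ∫ x, φ x - sf x ∂μ := integral_nonneg_of_ae hψ_nonneg
      rw [h1] at h2 ⊢
      rw [hint_s] at *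
      linarith
    have hae : (fun x => φ x - sf x) =ᵐ[μ] 0 :=
      (integral_eq_zero_iff_of_nonneg_ae hψ_nonneg hψ_int).1 hψ_zero
    refine (Lp.coeFn_le f s).1 ?_
    filter_upwards [hae, hs_coe] with x h1 h2
    have : max (f x) (sf x) - sf x = 0 := h1
    have hfx : f x ≤ sf x := by
      by_contra hcon
      push_neg at hcon
      rw [max_eq_left hcon.le] at this
      linarith
    rw [h2]
    exact hfx
  refine ⟨s, ⟨fun f hf => hub f hf, ?_⟩, ?_⟩
  · intro v hv
    refine (Lp.coeFn_le s v).1 ?_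
    have hvn : ∀ᵐ x ∂μ, ∀ n : ℕ, (g n).1 x ≤ v x :=
      ae_all_iff.2 fun n => (Lp.coeFn_le _ _).2 (hv (hgD n))
    filter_upwards [hvn, hs_coe] with x h1 h2
    rw [h2]
    exact ciSup_le h1
  · rw [hint_s']
    exact isLUB_csSup hSne hSbdd

end LinftyAux

/-- For a finite measure `μ`, every nonempty upward-directed bounded-above subset of the real
Banach lattice `L^∞(μ)` has a least upper bound, and the integral of the least upper bound is
the supremum of the integrals; moreover the integral is faithful on `L^∞(μ)`. -/
theorem Linfty_directed_lub_and_faithful_integral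
    {X : Type*} [MeasurableSpace X] (μ : Measure X) [IsFiniteMeasure μ] :
    (∀ D : Set (Lp ℝ ⊤ μ), D.Nonempty → DirectedOn (· ≤ ·) D → BddAbove D →
      ∃ s : Lp ℝ ⊤ μ, IsLUB D s ∧
        IsLUB ((fun f : Lp ℝ ⊤ μ => ∫ x, f x ∂μ) '' D) (∫ x, s x ∂μ)) ∧
    (∀ f : Lp ℝ ⊤ μ, 0 ≤ f → (∫ x, f x ∂μ) = 0 → f = 0) := by
  exact ⟨fun D hne hdir hbdd => LinftyAux.lub D hne hdir hbdd,
    fun f hf hint => LinftyAux.faithful f hf hint⟩
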